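/- Fix q with 0 < q < 1 and let λ₀, s₀ be real-valued functions on ℝ∖{0}. Suppose y : ℝ → ℝ satisfies (D_q²y)(x) = λ₀(x)(D_qy)(x) + s₀(x)y(x) for all x ≠ 0. Then for every n ≥ 1 and all x ≠ 0, λ_{n−1}(x)(D_q^{n+2}y)(x) − λ_n(x)(D_q^{n+1}y)(x) = (λ_{n−1}(x)s_n(x) − λ_n(x)s_{n−1}(x))·y(x). In particular, if the terminating condition s_n(x)λ_{n−1}(x) = s_{n−1}(x)λ_n(x) holds for all x ≠ 0, then λ_{n−1}(x)·D_q(D_q^{n+1}y)(x) = λ_n(x)·(D_q^{n+1}y)(x) for all x ≠ 0. -/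

import Mathlib

/-- The `q`-difference operator: `(D_q f)(x) = (f(x) - f(qx)) / ((1-q)x)`. -/
noncomputable def Dq (q : ℝ) (f : ℝ → ℝ) : ℝ → ℝ :=
  fun x => (f x - f (q * x)) / ((1 - q) * x)

/-- The q-AIM sequences `(λ_n, s_n)` built from `(λ₀, s₀)`. -/
noncomputable def qdaim (q : ℝ) (l0 s0 : ℝ → ℝ) : ℕ → (ℝ → ℝ) × (ℝ → ℝ)
  | 0 => (l0, s0)
  | n + 1 =>
      (fun x => Dq q (qdaim q l0 s0 n).1 x + (qdaim q l0 s0 n).1 (q * x) * l0 x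
          + (qdaim q l0 s0 n).2 (q * x),
       fun x => Dq q (qdaim q l0 s0 n).2 x + (qdaim q l0 s0 n).1 (q * x) * s0 x)

lemma qdaim_key (q : ℝ) (hq0 : 0 < q) (hq1 : q < 1) (l0 s0 y : ℝ → ℝ)
    (hy : ∀ x : ℝ, x ≠ 0 → (Dq q)^[2] y x = l0 x * Dq q y x + s0 x * y x) :
    ∀ n : ℕ, ∀ x : ℝ, x ≠ 0 →
      (Dq q)^[n+2] y x = (qdaim q l0 s0 n).1 x * Dq q y x + (qdaim q l0 s0 n).2 x * y x := by
  intro n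
  induction n with
  | zero => simpa [qdaim] using hy
  | succ n ih =>
    intro x hx
    have hqx : q * x ≠ 0 := mul_ne_zero (ne_of_gt hq0) hx
    have hc : (1 - q) * x ≠ 0 := mul_ne_zero (by linarith) hx
    have h1q : (1:ℝ) - q ≠ 0 := sub_ne_zero.mpr (ne_of_gt hq1)
    have hx' := ih x hx
    have hqx' := ih (q*x) hqx
    have hDy : y (q*x) = y x - (1-q)*x * Dq q y x := by
      rw [Dq]; field_simp; ring
    have h1' : (Dq q y x - Dq q y (q*x)) / ((1-q)*x) = l0 x * Dq q y x + s0 x * y x := by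
      have := hy x hx
      simpa [Dq] using this
    have hB : Dq q y (q*x) = Dq q y x - (1-q)*x*(l0 x * Dq q y x + s0 x * y x) := by
      field_simp at h1'
      linarith
    rw [show n+1+2 = (n+2)+1 from rfl, Function.iterate_succ_apply']
    show ((Dq q)^[n+2] y x - (Dq q)^[n+2] y (q*x)) / ((1-q)*x) = _
    rw [hx', hqx', hB, hDy]
    simp only [qdaim, Dq]
    field_simp
    ring

theorem stmt_15 (q : ℝ) (hq0 : 0 < q) (hq1 : q < 1) (l0 s0 : ℝ → ℝ) (y : ℝ → ℝ)
    (hy : ∀ x : ℝ, x ≠ 0 → (Dq q)^[2] y x = l0 x * Dq q y x + s0 x * y x)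
    (n : ℕ) (hn : 1 ≤ n) :
    (∀ x : ℝ, x ≠ 0 →
        (qdaim q l0 s0 (n - 1)).1 x * (Dq q)^[n + 2] y x
            - (qdaim q l0 s0 n).1 x * (Dq q)^[n + 1] y x
          = ((qdaim q l0 s0 (n - 1)).1 x * (qdaim q l0 s0 n).2 x
              - (qdaim q l0 s0 n).1 x * (qdaim q l0 s0 (n - 1)).2 x) * y x) ∧
      ((∀ x : ℝ, x ≠ 0 →
          (qdaim q l0 s0 n).2 x * (qdaim q l0 s0 (n - 1)).1 x
            = (qdaim q l0 s0 (n - 1)).2 x * (qdaim q l0 s0 n).1 x) →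
        ∀ x : ℝ, x ≠ 0 →
          (qdaim q l0 s0 (n - 1)).1 x * Dq q ((Dq q)^[n + 1] y) x
            = (qdaim q l0 s0 n).1 x * (Dq q)^[n + 1] y x) := by
  obtain ⟨m, rfl⟩ : ∃ m, n = m + 1 := ⟨n - 1, (Nat.succ_pred_eq_of_pos hn).symm⟩
  have hm : m + 1 - 1 = m := rfl
  have key := qdaim_key q hq0 hq1 l0 s0 y hy
  have main : ∀ x : ℝ, x ≠ 0 →
      (qdaim q l0 s0 m).1 x * (Dq q)^[m + 1 + 2] y x
          - (qdaim q l0 s0 (m + 1)).1 x * (Dq q)^[m + 1 + 1] y x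
        = ((qdaim q l0 s0 m).1 x * (qdaim q l0 s0 (m + 1)).2 x
            - (qdaim q l0 s0 (m + 1)).1 x * (qdaim q l0 s0 m).2 x) * y x := by
    intro x hx
    have h1 := key m x hx
    have h2 := key (m + 1) x hx
    rw [show m + 1 + 2 = (m + 1) + 2 from rfl, h2, show m + 1 + 1 = m + 2 from rfl, h1]
    ring
  refine ⟨by simpa [hm] using main, ?_⟩
  intro hterm x hx
  have h := main x hx
  have h' := hterm x hx
  rw [hm] at h' ⊢
  rw [show Dq q ((Dq q)^[m + 1 + 1] y) x = (Dq q)^[m + 1 + 2] y x from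
    (Function.iterate_succ_apply' (Dq q) (m + 1 + 1) y ▸ rfl)]
  linear_combination h + y x * h'
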